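/- For every λ > 0, if z = x + iy with x ≠ 0 and y ≠ 0, then f_λ'(z) ≠ 0, where f_λ(z) = sin(z)/(z² + λ); that is, every critical point of f_λ lies on the real axis or the imaginary axis. -/
import Mathlib
set_option maxHeartbeats 1000000

lemma abs_sin_lt_abs {t : ℝ} (ht : t ≠ 0) : |Real.sin t| < |t| := by
  have key : ∀ u : ℝ, 0 < u → |Real.sin u| < u := by
    intro u hu
    rcases lt_or_ge u Real.pi with h1 | h1
    · rw [abs_of_pos (Real.sin_pos_of_pos_of_lt_pi hu h1)]
      exact Real.sin_lt hu
    · calc |Real.sin u| ≤ 1 := Real.abs_sin_le_one u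
        _ < Real.pi := by linarith [Real.pi_gt_three]
        _ ≤ u := h1
  rcases ht.lt_or_gt with h | h
  · have := key (-t) (by linarith)
    rw [Real.sin_neg, abs_neg] at this
    rwa [abs_of_neg h]
  · rw [abs_of_pos h]; exact key t h

lemma key_ne (lam : ℝ) (hl : 0 < lam) (z : ℂ) (hre : z.re ≠ 0) (him : z.im ≠ 0) :
    Complex.cos z * (z ^ 2 + (lam : ℂ)) - Complex.sin z * (2 * z) ≠ 0 := by
  intro h
  obtain ⟨x, y, hz, hx, hy⟩ : ∃ x y : ℝ, z = x + y * Complex.I ∧ x ≠ 0 ∧ y ≠ 0 :=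
    ⟨z.re, z.im, (Complex.re_add_im z).symm, hre, him⟩
  rw [hz, Complex.sin_add_mul_I, Complex.cos_add_mul_I, ← Complex.ofReal_sin,
    ← Complex.ofReal_cos, ← Complex.ofReal_sinh, ← Complex.ofReal_cosh] at h
  have h1 := congrArg Complex.re h
  have h2 := congrArg Complex.im h
  simp only [pow_two, Complex.mul_re, Complex.mul_im, Complex.add_re, Complex.add_im,
    Complex.sub_re, Complex.sub_im, Complex.I_re, Complex.I_im, Complex.ofReal_re,
    Complex.ofReal_im, Complex.zero_re, Complex.zero_im, Complex.re_ofNat, Complex.im_ofNat,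
    mul_zero, zero_mul, mul_one, sub_zero, zero_sub, add_zero, zero_add, neg_zero, neg_neg] at h1 h2
  set s := Real.sin x with hs
  set c := Real.cos x with hc
  set sh := Real.sinh y with hsh
  set ch := Real.cosh y with hch
  have hpyth : s ^ 2 + c ^ 2 = 1 := Real.sin_sq_add_cos_sq x
  have hcosh : ch ^ 2 - sh ^ 2 = 1 := Real.cosh_sq_sub_sinh_sq y
  set P := x ^ 2 - y ^ 2 + lam with hP
  set Q := 2 * x * y with hQ
  have hS' : (s * ch) ^ 2 + (c * sh) ^ 2 = s ^ 2 + sh ^ 2 := by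
    linear_combination sh ^ 2 * hpyth + s ^ 2 * hcosh
  have hI : (P ^ 2 + Q ^ 2) * (s * c) = 2 * (s ^ 2 + sh ^ 2) * x * (x ^ 2 + y ^ 2 + lam) := by
    linear_combination (s * ch * P - c * sh * Q) * h1 + (s * ch * Q + c * sh * P) * h2 +
      2 * x * (x ^ 2 + y ^ 2 + lam) * hS' - s * c * (P ^ 2 + Q ^ 2) * hcosh
  have hII : (P ^ 2 + Q ^ 2) * (sh * ch) = 2 * (s ^ 2 + sh ^ 2) * y * (x ^ 2 + y ^ 2 - lam) := by
    linear_combination (s * ch * Q + c * sh * P) * h1 - (s * ch * P - c * sh * Q) * h2 +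
      2 * y * (x ^ 2 + y ^ 2 - lam) * hS' - sh * ch * (P ^ 2 + Q ^ 2) * hpyth
  have hsh0 : sh ≠ 0 := Real.sinh_ne_zero.2 hy
  have hS : 0 < s ^ 2 + sh ^ 2 := by positivity
  have hQ0 : Q ≠ 0 := mul_ne_zero (mul_ne_zero two_ne_zero hx) hy
  have hD : 0 < P ^ 2 + Q ^ 2 :=
    add_pos_of_nonneg_of_pos (sq_nonneg P) (lt_of_le_of_ne (sq_nonneg Q) (Ne.symm (pow_ne_zero 2 hQ0)))
  have hsc : |s * c| < |x| := by
    have h2x := abs_sin_lt_abs (t := 2 * x) (by simpa using hx)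
    rw [Real.sin_two_mul] at h2x
    simp only [abs_mul, abs_two] at h2x
    rw [abs_mul, hs, hc]
    linarith
  have hshch : |y| < |sh * ch| := by
    have h2y : |2 * y| < |Real.sinh (2 * y)| := by
      rw [Real.abs_sinh]
      exact Real.self_lt_sinh_iff.2 (abs_pos.2 (by simpa using hy))
    rw [Real.sinh_two_mul] at h2y
    simp only [abs_mul, abs_two] at h2y
    rw [abs_mul, hsh, hch]
    linarith
  have hrl : (0:ℝ) < x ^ 2 + y ^ 2 + lam := by positivity
  have e1 : (P ^ 2 + Q ^ 2) * |s * c| = 2 * (s ^ 2 + sh ^ 2) * |x| * (x ^ 2 + y ^ 2 + lam) := by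
    have h := congrArg abs hI
    rw [abs_mul, abs_of_pos hD] at h
    rw [h, abs_mul, abs_mul, abs_of_pos (mul_pos two_pos hS), abs_of_pos hrl]
  have e2 : (P ^ 2 + Q ^ 2) * |sh * ch| = 2 * (s ^ 2 + sh ^ 2) * |y| * |x ^ 2 + y ^ 2 - lam| := by
    have h := congrArg abs hII
    rw [abs_mul, abs_of_pos hD] at h
    rw [h, abs_mul, abs_mul, abs_of_pos (mul_pos two_pos hS)]
  have hxpos : 0 < |x| := abs_pos.2 hx
  have hypos : 0 < |y| := abs_pos.2 hy
  have lt1 : 2 * (s ^ 2 + sh ^ 2) * (x ^ 2 + y ^ 2 + lam) < P ^ 2 + Q ^ 2 := by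
    nlinarith [mul_lt_mul_of_pos_left hsc hD, e1]
  have lt2 : P ^ 2 + Q ^ 2 < 2 * (s ^ 2 + sh ^ 2) * |x ^ 2 + y ^ 2 - lam| := by
    nlinarith [mul_lt_mul_of_pos_left hshch hD, e2]
  have habs : |x ^ 2 + y ^ 2 - lam| ≤ x ^ 2 + y ^ 2 + lam := by
    rw [abs_le]
    constructor <;> nlinarith [sq_nonneg x, sq_nonneg y]
  nlinarith [mul_le_mul_of_nonneg_left habs (by positivity : (0:ℝ) ≤ 2 * (s ^ 2 + sh ^ 2))]

theorem stmt_8 (lam : ℝ) (hl : 0 < lam) (z : ℂ) (hre : z.re ≠ 0) (him : z.im ≠ 0) :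
    deriv (fun w : ℂ => Complex.sin w / (w ^ 2 + (lam : ℂ))) z ≠ 0 := by
  have hd : z ^ 2 + (lam : ℂ) ≠ 0 := by
    intro h0
    have : (z ^ 2 + (lam : ℂ)).im = 0 := by rw [h0]; rfl
    simp only [pow_two, Complex.add_im, Complex.mul_im, Complex.ofReal_im, add_zero] at this
    have : z.re * z.im = 0 := by linarith
    rcases mul_eq_zero.1 this with h | h
    exacts [hre h, him h]
  have hnum : HasDerivAt (fun w : ℂ => Complex.sin w) (Complex.cos z) z := Complex.hasDerivAt_sin z
  have hden : HasDerivAt (fun w : ℂ => w ^ 2 + (lam : ℂ)) (((2:ℕ) : ℂ) * z ^ 1) z :=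
    (hasDerivAt_pow 2 z).add_const _
  have hder : HasDerivAt (fun w : ℂ => Complex.sin w / (w ^ 2 + (lam : ℂ)))
      ((Complex.cos z * (z ^ 2 + (lam : ℂ)) - Complex.sin z * (((2:ℕ) : ℂ) * z ^ 1)) / (z ^ 2 + (lam : ℂ)) ^ 2) z :=
    hnum.div hden hd
  rw [hder.deriv]
  apply div_ne_zero _ (pow_ne_zero _ hd)
  have h2 : ((2:ℕ) : ℂ) * z ^ 1 = 2 * z := by push_cast; ring
  rw [h2]
  exact key_ne lam hl z hre him
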